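/- Let q be a power of an odd prime with q ≡ 1 (mod 3) and F = 𝔽_q, and let φ be an automorphism of the graph R that maps lines to lines and such that for every line the second component of its image under φ equals its own second component. Then there exists b ∈ F such that φ = t_b, i.e., φ((p₁,p₂,p₃)) = (p₁,p₂,p₃+b) for every point and φ([ℓ₁,ℓ₂,ℓ₃]) = [ℓ₁,ℓ₂,ℓ₃−b] for every line. -/

import Mathlib

open Polynomial Finset

section AuxSum
variable {F : Type} [Field F] [Fintype F]

private lemma my_sum_pow_card_sub_one : ∑ t : F, t ^ (Fintype.card F - 1) = -1 := by
  classical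
  have hq : 1 < Fintype.card F := Fintype.one_lt_card
  have h0 : (0:F) ^ (Fintype.card F - 1) = 0 := zero_pow (by omega)
  rw [← Finset.add_sum_erase _ _ (Finset.mem_univ (0:F)), h0, zero_add]
  rw [Finset.sum_congr rfl (fun t ht => FiniteField.pow_card_sub_one_eq_one t
    (Finset.ne_of_mem_erase ht)), Finset.sum_const,
    Finset.card_erase_of_mem (Finset.mem_univ _), Finset.card_univ, nsmul_eq_mul, mul_one]
  have hc : ((Fintype.card F : ℕ) : F) = 0 := FiniteField.cast_card_eq_zero F
  rw [Nat.cast_sub (by omega), hc, Nat.cast_one, zero_sub]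

private lemma my_sum_eval (P : Polynomial F) (hP : P.natDegree ≤ Fintype.card F - 1) :
    ∑ t : F, P.eval t = - P.coeff (Fintype.card F - 1) := by
  classical
  have hq : 1 < Fintype.card F := Fintype.one_lt_card
  have hlt : P.natDegree < Fintype.card F := lt_of_le_of_lt hP (by omega)
  rw [Finset.sum_congr rfl (fun t _ => eval_eq_sum_range' hlt t), Finset.sum_comm]
  have hstep : ∀ i ∈ Finset.range (Fintype.card F),
      (∑ t : F, P.coeff i * t ^ i) = if i = Fintype.card F - 1 then - P.coeff i else 0 := by
    intro i hi
    rw [← Finset.mul_sum]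
    by_cases h : i = Fintype.card F - 1
    · rw [h, my_sum_pow_card_sub_one, if_pos rfl]; ring
    · have hi' : i < Fintype.card F - 1 := by
        rw [Finset.mem_range] at hi; omega
      rw [FiniteField.sum_pow_lt_card_sub_one F i hi', if_neg h, mul_zero]
  rw [Finset.sum_congr rfl hstep, Finset.sum_ite_eq' (Finset.range (Fintype.card F))]
  rw [if_pos (Finset.mem_range.mpr (by omega))]

private lemma my_sum_B (x a : F) (h5 : 4 < Fintype.card F) :
    ∑ t : F, ((t*x - a) * (t + (t*x - a) + t*(t*x - a))) = 0 := by
  classical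
  set P : Polynomial F := C (x^2) * X^3 + C (x*(1+x-2*a)) * X^2
      + C (-(a*(1+2*x-a))) * X + C (a^2) with hPdef
  have hdeg : P.natDegree ≤ 3 := by rw [hPdef]; compute_degree
  have heval : ∀ t : F, ((t*x - a) * (t + (t*x - a) + t*(t*x - a))) = P.eval t := by
    intro t; rw [hPdef]; simp; ring
  rw [Finset.sum_congr rfl (fun t _ => heval t), my_sum_eval P (by omega),
    Polynomial.coeff_eq_zero_of_natDegree_lt (by omega), neg_zero]

private lemma my_sum_B_pow (x a : F) (j : ℕ) (hj : 1 ≤ j)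
    (h3j : 3 * j = Fintype.card F - 1) :
    ∑ t : F, ((t*x - a) * (t + (t*x - a) + t*(t*x - a)))^j = - x ^ (2*j) := by
  classical
  set P : Polynomial F := C (x^2) * X^3 + C (x*(1+x-2*a)) * X^2
      + C (-(a*(1+2*x-a))) * X + C (a^2) with hPdef
  have hdeg : P.natDegree ≤ 3 := by rw [hPdef]; compute_degree
  have heval : ∀ t : F, ((t*x - a) * (t + (t*x - a) + t*(t*x - a))) = P.eval t := by
    intro t; rw [hPdef]; simp; ring
  have hdegPj : (P^j).natDegree ≤ Fintype.card F - 1 := by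
    refine le_trans Polynomial.natDegree_pow_le ?_
    calc j * P.natDegree ≤ j * 3 := Nat.mul_le_mul_left j hdeg
    _ = Fintype.card F - 1 := by omega
  have hsum : ∑ t : F, ((t*x - a) * (t + (t*x - a) + t*(t*x - a)))^j
      = - (P^j).coeff (Fintype.card F - 1) := by
    rw [Finset.sum_congr rfl (fun t _ => by rw [heval t, ← Polynomial.eval_pow]),
      my_sum_eval _ hdegPj]
  rw [hsum]
  congr 1
  by_cases hx : x = 0
  · have hP1 : P = C (-(a*(1+2*x-a))) * X + C (a^2) := by
      rw [hPdef, hx]; simp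
    have hd1 : P.natDegree ≤ 1 := by rw [hP1]; compute_degree
    have : (P^j).natDegree < Fintype.card F - 1 := by
      refine lt_of_le_of_lt (le_trans Polynomial.natDegree_pow_le
        (Nat.mul_le_mul_left j hd1)) ?_
      omega
    rw [Polynomial.coeff_eq_zero_of_natDegree_lt this, hx]
    rw [zero_pow (by omega)]
  · have hc3 : P.coeff 3 = x^2 := by
      rw [hPdef]
      simp only [Polynomial.coeff_add, Polynomial.coeff_C_mul, Polynomial.coeff_X_pow,
        Polynomial.coeff_C, Polynomial.coeff_X]
      norm_num
    have hx2 : x^2 ≠ 0 := pow_ne_zero 2 hx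
    have hnd : P.natDegree = 3 :=
      le_antisymm hdeg (Polynomial.le_natDegree_of_ne_zero (by rw [hc3]; exact hx2))
    have hlc : P.leadingCoeff = x^2 := by rw [Polynomial.leadingCoeff, hnd, hc3]
    have hndj : (P^j).natDegree = 3 * j := by
      rw [Polynomial.natDegree_pow' (by rw [hlc]; exact pow_ne_zero j hx2), hnd]; ring
    have hcf : (P^j).coeff (Fintype.card F - 1) = (P^j).leadingCoeff := by
      rw [Polynomial.leadingCoeff, hndj, h3j]
    rw [hcf, Polynomial.leadingCoeff_pow, hlc]; ring

end AuxSum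
/-- Vertices: points (left component) and lines (right component), each a triple over `F`. -/
abbrev Vtx (F : Type) := (F × F × F) ⊕ (F × F × F)

/-- Adjacency for the graph `Γ_F(p₁ℓ₁, g(p₁,p₂,ℓ₁))`: a point `(p₁,p₂,p₃)` and a line
`[ℓ₁,ℓ₂,ℓ₃]` are adjacent iff `p₂+ℓ₂ = p₁ℓ₁` and `p₃+ℓ₃ = g(p₁,p₂,ℓ₁)`. -/
def gammaAdj (F : Type) [Field F] (g : F → F → F → F) : Vtx F → Vtx F → Prop
  | Sum.inl p, Sum.inr l => p.2.1 + l.2.1 = p.1 * l.1 ∧ p.2.2 + l.2.2 = g p.1 p.2.1 l.1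
  | Sum.inr l, Sum.inl p => p.2.1 + l.2.1 = p.1 * l.1 ∧ p.2.2 + l.2.2 = g p.1 p.2.1 l.1
  | _, _ => False

/-- The bipartite graph `Γ_F(p₁ℓ₁, g(p₁,p₂,ℓ₁))`. -/
def Gamma (F : Type) [Field F] (g : F → F → F → F) : SimpleGraph (Vtx F) where
  Adj := gammaAdj F g
  symm := by
    constructor
    intro v w h
    match v, w with
    | Sum.inl p, Sum.inr l => exact h
    | Sum.inr l, Sum.inl p => exact h
  loopless := by
    constructor
    intro v h
    match v with
    | Sum.inl p => exact h
    | Sum.inr l => exact h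

/-- The graph `R = Γ_F(p₁ℓ₁, p₁p₂ℓ₁(p₁+p₂+p₁p₂))`. -/
def RGraph (F : Type) [Field F] : SimpleGraph (Vtx F) :=
  Gamma F (fun p1 p2 l1 => p1 * p2 * l1 * (p1 + p2 + p1 * p2))

/-- Let `q` be a power of an odd prime with `q ≡ 1 (mod 3)` and `F = 𝔽_q`, and let `φ` be an
automorphism of `R` that maps lines to lines with the second component of the image of every
line equal to its own second component. Then there exists `b ∈ F` such that `φ = t_b`, i.e.
`φ((p₁,p₂,p₃)) = (p₁,p₂,p₃+b)` for every point and `φ([ℓ₁,ℓ₂,ℓ₃]) = [ℓ₁,ℓ₂,ℓ₃−b]` for every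
line. -/
theorem aut_is_translation (q p e : ℕ) (hp : p.Prime) (hodd : Odd p) (he : 1 ≤ e)
    (hq : q = p ^ e) (hmod : q % 3 = 1) (F : Type) [Field F] [Fintype F]
    (hcard : Fintype.card F = q) (φ : RGraph F ≃g RGraph F)
    (hlines : ∀ x a r : F, ∃ x' r' : F, φ (Sum.inr (x, a, r)) = Sum.inr (x', a, r')) :
    ∃ b : F,
      (∀ p1 p2 p3 : F, φ (Sum.inl (p1, p2, p3)) = Sum.inl (p1, p2, p3 + b)) ∧
        (∀ l1 l2 l3 : F, φ (Sum.inr (l1, l2, l3)) = Sum.inr (l1, l2, l3 - b)) := by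
  classical
  -- numeric facts
  have hp3 : 3 ≤ p := by
    have h2 := hp.two_le
    have hpo := Nat.odd_iff.mp hodd
    omega
  have hq3 : 3 ≤ q := le_trans hp3 (by rw [hq]; exact Nat.le_self_pow (by omega) p)
  have hqodd : q % 2 = 1 := Nat.odd_iff.mp (hq ▸ hodd.pow)
  have hq7 : 7 ≤ q := by omega
  have hq7' : 7 ≤ Fintype.card F := by rw [hcard]; exact hq7
  have hcast0 : ((Fintype.card F : ℕ) : F) = 0 := FiniteField.cast_card_eq_zero F
  have h2ne : (2:F) ≠ 0 := by
    intro h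
    obtain ⟨k, hk⟩ : ∃ k, q = 2*k + 1 := ⟨q/2, by omega⟩
    have h0 : ((q:ℕ):F) = 0 := by rw [← hcard]; exact hcast0
    rw [hk] at h0; push_cast at h0; rw [h] at h0
    simp at h0
  set j := (q-1)/3 with hjdef
  have h3j : 3 * j = Fintype.card F - 1 := by rw [hcard]; omega
  have hj1 : 1 ≤ j := by omega
  -- choose line images
  choose Xf Rf hXR using hlines
  have hinj : Function.Injective (φ : Vtx F → Vtx F) := φ.injective
  -- points map to points
  have hpts : ∀ pp : F×F×F, ∃ PP, φ (Sum.inl pp) = Sum.inl PP := by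
    intro pp
    cases hφp : φ (Sum.inl pp) with
    | inl PP => exact ⟨PP, rfl⟩
    | inr ll =>
      exfalso
      have hΛ : ∀ v : F×F×F, φ (Sum.inr v) =
          Sum.inr (Xf v.1 v.2.1 v.2.2, v.2.1, Rf v.1 v.2.1 v.2.2) :=
        fun v => hXR v.1 v.2.1 v.2.2
      have hΛinj : Function.Injective
          (fun v : F×F×F => ((Xf v.1 v.2.1 v.2.2, v.2.1, Rf v.1 v.2.1 v.2.2) : F×F×F)) := by
        intro v w h
        have : φ (Sum.inr v) = φ (Sum.inr w) := by
          rw [hΛ v, hΛ w]; exact congrArg _ h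
        exact Sum.inr.inj (hinj this)
      obtain ⟨w, hw⟩ := Finite.surjective_of_injective hΛinj ll
      have hw' : φ (Sum.inr w) = Sum.inr ll := by
        rw [hΛ w]; exact congrArg Sum.inr hw
      have : φ (Sum.inr w) = φ (Sum.inl pp) := by rw [hw', hφp]
      simpa using hinj this
  choose Ψ hΨ using hpts
  have hΨinj : Function.Injective Ψ := by
    intro u u' h
    have : φ (Sum.inl u) = φ (Sum.inl u') := by rw [hΨ u, hΨ u', h]
    exact Sum.inl.inj (hinj this)
  -- adjacency transfer
  have hAdjPL : ∀ (pp ll : F×F×F), (RGraph F).Adj (Sum.inl pp) (Sum.inr ll) ↔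
      (pp.2.1 + ll.2.1 = pp.1 * ll.1 ∧
        pp.2.2 + ll.2.2 = pp.1*pp.2.1*ll.1*(pp.1+pp.2.1+pp.1*pp.2.1)) :=
    fun pp ll => Iff.rfl
  have hKey : ∀ p1 p2 p3 x a r : F, p2 + a = p1*x → p3 + r = p1*p2*x*(p1+p2+p1*p2) →
      ((Ψ (p1,p2,p3)).2.1 + a = (Ψ (p1,p2,p3)).1 * Xf x a r ∧
       (Ψ (p1,p2,p3)).2.2 + Rf x a r = (Ψ (p1,p2,p3)).1 * (Ψ (p1,p2,p3)).2.1 * Xf x a r *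
         ((Ψ (p1,p2,p3)).1 + (Ψ (p1,p2,p3)).2.1 + (Ψ (p1,p2,p3)).1 * (Ψ (p1,p2,p3)).2.1)) := by
    intro p1 p2 p3 x a r h1 h2
    have hA : (RGraph F).Adj (Sum.inl (p1,p2,p3)) (Sum.inr (x,a,r)) :=
      (hAdjPL (p1,p2,p3) (x,a,r)).mpr ⟨h1, h2⟩
    have hA2 := φ.map_adj_iff.mpr hA
    rw [hΨ (p1,p2,p3), hXR x a r] at hA2
    exact (hAdjPL _ _).mp hA2
  -- R is independent of x
  have hRx : ∀ x x' a r : F, Rf x a r = Rf x' a r := by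
    intro x x' a r
    have h1 := hKey 0 (-a) (-r) x a r (by ring) (by ring)
    have h2 := hKey 0 (-a) (-r) x' a r (by ring) (by ring)
    by_cases hX : Xf x a r = Xf x' a r
    · have e1 := h1.2; have e2 := h2.2
      rw [hX] at e1
      linear_combination e1 - e2
    · have hP1 : (Ψ ((0:F),-a,-r)).1 = 0 := by
        by_contra hP
        exact hX (mul_left_cancel₀ hP (by linear_combination h2.1 - h1.1))
      have e1 := h1.2; have e2 := h2.2
      rw [hP1] at e1 e2
      linear_combination e1 - e2
  have hXinj : ∀ a r x x' : F, Xf x a r = Xf x' a r → x = x' := by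
    intro a r x x' h
    have heq : φ (Sum.inr (x,a,r)) = φ (Sum.inr (x',a,r)) := by
      rw [hXR, hXR, h, hRx x x' a r]
    have h3 : ((x,a,r) : F×F×F) = (x',a,r) := Sum.inr.inj (hinj heq)
    exact congrArg Prod.fst h3
  -- images of points with first coordinate zero
  have hp0 : ∀ p2 p3 : F, Ψ (0,p2,p3) = (0, p2, - Rf 0 (-p2) (-p3)) := by
    intro p2 p3
    have h0 := hKey 0 p2 p3 0 (-p2) (-p3) (by ring) (by ring)
    have h1 := hKey 0 p2 p3 1 (-p2) (-p3) (by ring) (by ring)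
    have hXne : Xf 0 (-p2) (-p3) ≠ Xf 1 (-p2) (-p3) :=
      fun hc => zero_ne_one (hXinj (-p2) (-p3) 0 1 hc)
    have hP1 : (Ψ ((0:F),p2,p3)).1 = 0 := by
      by_contra hP
      exact hXne (mul_left_cancel₀ hP (by linear_combination h1.1 - h0.1))
    have hP2 : (Ψ ((0:F),p2,p3)).2.1 = p2 := by
      have e := h0.1; rw [hP1] at e; linear_combination e
    have hP3 : (Ψ ((0:F),p2,p3)).2.2 = - Rf 0 (-p2) (-p3) := by
      have e := h0.2; rw [hP1] at e; linear_combination e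
    exact Prod.ext hP1 (Prod.ext hP2 hP3)
  -- images of points with nonzero first coordinate
  have fact4 : ∀ p1 p2 p3 : F, p1 ≠ 0 → ((Ψ (p1,p2,p3)).1 ≠ 0 ∧ ∀ x : F,
      ((Ψ (p1,p2,p3)).2.1 + (p1*x - p2)
          = (Ψ (p1,p2,p3)).1 * Xf x (p1*x - p2) (p1*p2*x*(p1+p2+p1*p2) - p3) ∧
       (Ψ (p1,p2,p3)).2.2 + Rf 0 (p1*x - p2) (p1*p2*x*(p1+p2+p1*p2) - p3)
          = ((Ψ (p1,p2,p3)).2.1 * ((Ψ (p1,p2,p3)).1 + (Ψ (p1,p2,p3)).2.1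
              + (Ψ (p1,p2,p3)).1 * (Ψ (p1,p2,p3)).2.1))
            * ((Ψ (p1,p2,p3)).2.1 + (p1*x - p2)))) := by
    intro p1 p2 p3 hp1
    have hkx : ∀ x : F,
        ((Ψ (p1,p2,p3)).2.1 + (p1*x-p2)
            = (Ψ (p1,p2,p3)).1 * Xf x (p1*x-p2) (p1*p2*x*(p1+p2+p1*p2) - p3) ∧
         (Ψ (p1,p2,p3)).2.2 + Rf x (p1*x-p2) (p1*p2*x*(p1+p2+p1*p2) - p3)
            = (Ψ (p1,p2,p3)).1 * (Ψ (p1,p2,p3)).2.1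
                * Xf x (p1*x-p2) (p1*p2*x*(p1+p2+p1*p2) - p3)
                * ((Ψ (p1,p2,p3)).1 + (Ψ (p1,p2,p3)).2.1
                    + (Ψ (p1,p2,p3)).1 * (Ψ (p1,p2,p3)).2.1)) :=
      fun x => hKey p1 p2 p3 x (p1*x-p2) (p1*p2*x*(p1+p2+p1*p2) - p3) (by ring) (by ring)
    have hP1 : (Ψ (p1,p2,p3)).1 ≠ 0 := by
      intro hP
      have e0 := (hkx 0).1
      have e1 := (hkx 1).1
      rw [hP] at e0 e1
      apply hp1
      linear_combination e1 - e0
    refine ⟨hP1, fun x => ⟨(hkx x).1, ?_⟩⟩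
    have e1 := (hkx x).1
    have e2 := (hkx x).2
    rw [hRx x 0 (p1*x-p2) (p1*p2*x*(p1+p2+p1*p2) - p3)] at e2
    linear_combination e2 - ((Ψ (p1,p2,p3)).2.1 * ((Ψ (p1,p2,p3)).1 + (Ψ (p1,p2,p3)).2.1
      + (Ψ (p1,p2,p3)).1 * (Ψ (p1,p2,p3)).2.1)) * e1
  -- the ρ functional equation
  have hstar : ∀ p1 p2 p3 : F, p1 ≠ 0 → ∀ a : F,
      Rf 0 a ((p2*(p1+p2+p1*p2)) * (a+p2) - p3)
        = ((Ψ (p1,p2,p3)).2.1 * ((Ψ (p1,p2,p3)).1 + (Ψ (p1,p2,p3)).2.1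
            + (Ψ (p1,p2,p3)).1 * (Ψ (p1,p2,p3)).2.1))
          * ((Ψ (p1,p2,p3)).2.1 + a) - (Ψ (p1,p2,p3)).2.2 := by
    intro p1 p2 p3 hp1 a
    obtain ⟨hP1, hx⟩ := fact4 p1 p2 p3 hp1
    have h := (hx ((a+p2)/p1)).2
    rw [show p1*((a+p2)/p1) - p2 = a from by field_simp; ring,
        show p1*p2*((a+p2)/p1)*(p1+p2+p1*p2) - p3 = (p2*(p1+p2+p1*p2))*(a+p2) - p3 from by
          field_simp] at h
    linear_combination h
  -- ρ(a,y) is affine in a for each y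
  have h5a : ∀ y : F, ∃ w v : F, ∀ a : F, Rf 0 a y = w * a + v := by
    intro y
    refine ⟨(Ψ ((1:F),0,-y)).2.1 * ((Ψ ((1:F),0,-y)).1 + (Ψ ((1:F),0,-y)).2.1
        + (Ψ ((1:F),0,-y)).1 * (Ψ ((1:F),0,-y)).2.1),
      (Ψ ((1:F),0,-y)).2.1 * ((Ψ ((1:F),0,-y)).1 + (Ψ ((1:F),0,-y)).2.1
        + (Ψ ((1:F),0,-y)).1 * (Ψ ((1:F),0,-y)).2.1) * (Ψ ((1:F),0,-y)).2.1
        - (Ψ ((1:F),0,-y)).2.2, fun a => ?_⟩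
    have h := hstar 1 0 (-y) one_ne_zero a
    rw [show ((0:F)*(1+0+1*0)) * (a+0) - -y = y from by ring] at h
    linear_combination h
  choose w v hwv using h5a
  -- avoidance helpers
  have hnotin : ∀ s : Finset F, s.card < Fintype.card F → ∃ t : F, t ∉ s := by
    intro s hs
    by_contra hcon
    push_neg at hcon
    have hsub : (Finset.univ : Finset F) ⊆ s := fun t _ => hcon t
    have := Finset.card_le_card hsub
    rw [Finset.card_univ] at this
    omega
  have hreal : ∀ hc : F, ∃ p2 : F, p2 ≠ 0 ∧ p2 ≠ -1 ∧ p2^2 ≠ hc := by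
    intro hc
    by_cases hs : ∃ s0 : F, s0^2 = hc
    · obtain ⟨s0, hs0⟩ := hs
      have hcard4 : ({0, -1, s0, -s0} : Finset F).card < Fintype.card F := by
        refine lt_of_le_of_lt ?_ (show 4 < Fintype.card F from by omega)
        refine le_trans (Finset.card_insert_le _ _) (Nat.succ_le_succ ?_)
        refine le_trans (Finset.card_insert_le _ _) (Nat.succ_le_succ ?_)
        refine le_trans (Finset.card_insert_le _ _) (Nat.succ_le_succ ?_)
        exact le_of_eq (Finset.card_singleton _)
      obtain ⟨t, ht⟩ := hnotin _ hcard4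
      simp only [Finset.mem_insert, Finset.mem_singleton, not_or] at ht
      refine ⟨t, ht.1, ht.2.1, fun h => ?_⟩
      have hfac : (t - s0) * (t + s0) = 0 := by linear_combination h - hs0
      rcases mul_eq_zero.mp hfac with h' | h'
      · exact ht.2.2.1 (by linear_combination h')
      · exact ht.2.2.2 (by linear_combination h')
    · have hcard2 : ({0, -1} : Finset F).card < Fintype.card F := by
        refine lt_of_le_of_lt ?_ (show 2 < Fintype.card F from by omega)
        refine le_trans (Finset.card_insert_le _ _) (Nat.succ_le_succ ?_)
        exact le_of_eq (Finset.card_singleton _)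
      obtain ⟨t, ht⟩ := hnotin _ hcard2
      simp only [Finset.mem_insert, Finset.mem_singleton, not_or] at ht
      exact ⟨t, ht.1, ht.2, fun h => hs ⟨t, h⟩⟩
  -- the functional equation for w, v
  have hFE : ∀ hc s : F, ∃ A B : F, ∀ a : F, w (hc*a + s) * a + v (hc*a + s) = A*a + B := by
    intro hc s
    obtain ⟨p2, hp20, hp2m1, hp2sq⟩ := hreal hc
    set p1 : F := (hc - p2^2)/(p2*(1+p2)) with hp1def
    have hden : p2*(1+p2) ≠ 0 :=
      mul_ne_zero hp20 (fun h => hp2m1 (by linear_combination h))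
    have hp1 : p1 ≠ 0 := by
      rw [hp1def]
      exact div_ne_zero (fun h => hp2sq (by linear_combination -h)) hden
    have hhc : p2*(p1+p2+p1*p2) = hc := by
      rw [hp1def]; linear_combination div_mul_cancel₀ (hc - p2^2) hden
    refine ⟨(Ψ (p1,p2,hc*p2-s)).2.1 * ((Ψ (p1,p2,hc*p2-s)).1 + (Ψ (p1,p2,hc*p2-s)).2.1
        + (Ψ (p1,p2,hc*p2-s)).1 * (Ψ (p1,p2,hc*p2-s)).2.1),
      (Ψ (p1,p2,hc*p2-s)).2.1 * ((Ψ (p1,p2,hc*p2-s)).1 + (Ψ (p1,p2,hc*p2-s)).2.1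
        + (Ψ (p1,p2,hc*p2-s)).1 * (Ψ (p1,p2,hc*p2-s)).2.1) * (Ψ (p1,p2,hc*p2-s)).2.1
        - (Ψ (p1,p2,hc*p2-s)).2.2, fun a => ?_⟩
    have h := hstar p1 p2 (hc*p2-s) hp1 a
    rw [show (p2*(p1+p2+p1*p2))*(a+p2) - (hc*p2 - s) = hc*a + s from by
      rw [hhc]; ring] at h
    rw [hwv (hc*a+s) a] at h
    linear_combination h
  obtain ⟨A1, B1, hE1⟩ := hFE 1 0
  obtain ⟨A2, B2, hE2⟩ := hFE 1 1
  obtain ⟨A3, B3, hE3⟩ := hFE 2 0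
  have hE1' : ∀ z : F, w z * z + v z = A1*z + B1 := by
    intro z
    have := hE1 z
    rw [show (1:F)*z + 0 = z from by ring] at this
    exact this
  have hE2' : ∀ z : F, w z * (z-1) + v z = A2*(z-1) + B2 := by
    intro z
    have := hE2 (z-1)
    rw [show (1:F)*(z-1) + 1 = z from by ring] at this
    linear_combination this
  have hwaff : ∀ z : F, w z = (A1-A2)*z + (B1-B2+A2) := by
    intro z
    linear_combination hE1' z - hE2' z
  have h4ne : (4:F) ≠ 0 := by
    intro h
    rcases mul_eq_zero.mp (show (2:F)*2 = 0 from by linear_combination h) with h' | h'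
    · exact h2ne h'
    · exact h2ne h'
  have hkey3 : ∀ a : F, ((A1-A2)*(2*a) + (B1-B2+A2))*a = (2*A1-A3)*a + (B1-B3) := by
    intro a
    have e3 := hE3 a
    rw [show (2:F)*a + 0 = 2*a from by ring] at e3
    have e1 := hE1' (2*a)
    have hw2 := hwaff (2*a)
    linear_combination e1 - e3 - a * hw2
  have hkappa : A1 - A2 = 0 := by
    have k0 := hkey3 0
    have k1 := hkey3 1
    have km1 := hkey3 (-1)
    have h40 : (4:F)*(A1-A2) = 0 := by linear_combination k1 + km1 - 2*k0
    rcases mul_eq_zero.mp h40 with h' | h'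
    · exact absurd h' h4ne
    · exact h'
  have hρ : ∀ a y : F, Rf 0 a y = (B1-B2+A2)*a + ((A1-(B1-B2+A2))*y + B1) := by
    intro a y
    rw [hwv y a, hwaff y, hkappa]
    have h1 := hE1' y
    rw [hwaff y, hkappa] at h1
    linear_combination h1
  -- h-preservation up to affine map
  have hBpre : ∀ p1 p2 p3 : F, p1 ≠ 0 →
      (Ψ (p1,p2,p3)).2.1 * ((Ψ (p1,p2,p3)).1 + (Ψ (p1,p2,p3)).2.1
          + (Ψ (p1,p2,p3)).1 * (Ψ (p1,p2,p3)).2.1)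
        = (A1-(B1-B2+A2)) * (p2*(p1+p2+p1*p2)) + (B1-B2+A2) := by
    intro p1 p2 p3 hp1
    have h0 := hstar p1 p2 p3 hp1 0
    have h1 := hstar p1 p2 p3 hp1 1
    rw [hρ] at h0 h1
    linear_combination h0 - h1
  -- facts about points on a line (0, a, r)
  have lineFacts : ∀ a r t : F, t ≠ 0 →
      ((Ψ (t,-a,-r)).1 ≠ 0 ∧
       (Ψ (t,-a,-r)).2.1 + a = (Ψ (t,-a,-r)).1 * Xf 0 a r ∧
       (Ψ (t,-a,-r)).2.2 + Rf 0 a r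
          = ((Ψ (t,-a,-r)).2.1 * ((Ψ (t,-a,-r)).1 + (Ψ (t,-a,-r)).2.1
              + (Ψ (t,-a,-r)).1 * (Ψ (t,-a,-r)).2.1)) * ((Ψ (t,-a,-r)).2.1 + a)) := by
    intro a r t ht
    obtain ⟨h1, h2⟩ := fact4 t (-a) (-r) ht
    have e := h2 0
    rw [show t*0 - -a = a from by ring,
        show t*(-a)*0*(t + -a + t*(-a)) - -r = r from by ring] at e
    exact ⟨h1, e.1, e.2⟩
  -- reindexing sums over nonzero elements via the line point bijection
  have lineSum : ∀ a r : F, ∀ f : F → F,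
      ∑ T ∈ Finset.univ.erase (0:F), f T
        = ∑ t ∈ Finset.univ.erase (0:F), f ((Ψ (t,-a,-r)).1) := by
    intro a r f
    have hinj' : ∀ t ∈ Finset.univ.erase (0:F), ∀ t' ∈ Finset.univ.erase (0:F),
        (Ψ (t,-a,-r)).1 = (Ψ (t',-a,-r)).1 → t = t' := by
      intro t ht t' ht' hgg
      have ft := lineFacts a r t (Finset.ne_of_mem_erase ht)
      have ft' := lineFacts a r t' (Finset.ne_of_mem_erase ht')
      have h21 : (Ψ (t,-a,-r)).2.1 = (Ψ (t',-a,-r)).2.1 := by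
        linear_combination ft.2.1 - ft'.2.1 + Xf 0 a r * hgg
      have e' := ft'.2.2
      rw [← hgg, ← h21] at e'
      have h22 : (Ψ (t,-a,-r)).2.2 = (Ψ (t',-a,-r)).2.2 := by
        linear_combination ft.2.2 - e'
      have hΨeq : Ψ (t,-a,-r) = Ψ (t',-a,-r) := Prod.ext hgg (Prod.ext h21 h22)
      have := hΨinj hΨeq
      exact congrArg Prod.fst this
    have himg : (Finset.univ.erase (0:F)).image (fun t => (Ψ (t,-a,-r)).1)
        = Finset.univ.erase 0 := by
      apply Finset.eq_of_subset_of_card_le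
      · intro T hT
        obtain ⟨t, ht, rfl⟩ := Finset.mem_image.mp hT
        exact Finset.mem_erase.mpr
          ⟨(lineFacts a r t (Finset.ne_of_mem_erase ht)).1, Finset.mem_univ _⟩
      · rw [Finset.card_image_of_injOn (fun t ht t' ht' h => hinj' t ht t' ht' h)]
    conv_lhs => rw [← himg]
    rw [Finset.sum_image (fun t ht t' ht' h => hinj' t ht t' ht' h)]
  have hcarde : ((Finset.univ.erase (0:F)).card : F) = -1 := by
    rw [Finset.card_erase_of_mem (Finset.mem_univ _), Finset.card_univ,
      Nat.cast_sub (by omega), hcast0, Nat.cast_one, zero_sub]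
  -- M = 1, B = 0
  have hmain : ∀ a : F, a^2 = (A1-(B1-B2+A2)) * a^2 + (B1-B2+A2) := by
    intro a
    have e1 : ∑ T ∈ Finset.univ.erase (0:F),
        ((T*(Xf 0 a 0) - a) * (T + (T*(Xf 0 a 0) - a) + T*(T*(Xf 0 a 0) - a)))
          = -(a^2) := by
      have h1 := my_sum_B (Xf 0 a 0) a (by omega)
      rw [Finset.sum_erase_eq_sub (Finset.mem_univ (0:F)), h1]
      show (0:F) - (((0:F)*(Xf 0 a 0) - a) * ((0:F) + ((0:F)*(Xf 0 a 0) - a)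
        + (0:F)*((0:F)*(Xf 0 a 0) - a))) = -(a^2)
      ring
    have e3 : ∀ t ∈ Finset.univ.erase (0:F),
        (((Ψ (t,-a,-(0:F))).1*(Xf 0 a 0) - a) * ((Ψ (t,-a,-(0:F))).1
            + ((Ψ (t,-a,-(0:F))).1*(Xf 0 a 0) - a)
            + (Ψ (t,-a,-(0:F))).1*((Ψ (t,-a,-(0:F))).1*(Xf 0 a 0) - a)))
          = (A1-(B1-B2+A2)) * (-a*(t + -a + t * -a)) + (B1-B2+A2) := by
      intro t ht
      have ht0 := Finset.ne_of_mem_erase ht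
      have lf := lineFacts a 0 t ht0
      have hbp := hBpre t (-a) (-(0:F)) ht0
      have h21 : (Ψ (t,-a,-(0:F))).2.1 = (Ψ (t,-a,-(0:F))).1*(Xf 0 a 0) - a := by
        linear_combination lf.2.1
      rw [← h21]
      linear_combination hbp
    have e5 : ∑ t ∈ Finset.univ.erase (0:F), (-a*(t + -a + t * -a)) = -(a^2) := by
      have h1 : ∑ t : F, (-a*(t + -a + t * -a)) = 0 := by
        rw [show (fun t : F => -a*(t + -a + t * -a))
            = (fun t : F => (t*0 - a) * (t + (t*0 - a) + t*(t*0 - a))) from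
          funext (fun t => by ring)]
        exact my_sum_B 0 a (by omega)
      rw [Finset.sum_erase_eq_sub (Finset.mem_univ (0:F)), h1]
      show (0:F) - (-a*((0:F) + -a + (0:F) * -a)) = -(a^2)
      ring
    have e2 := lineSum a 0 (fun T => ((T*(Xf 0 a 0) - a) * (T + (T*(Xf 0 a 0) - a)
        + T*(T*(Xf 0 a 0) - a))))
    have e4 : ∑ t ∈ Finset.univ.erase (0:F),
        ((A1-(B1-B2+A2)) * (-a*(t + -a + t * -a)) + (B1-B2+A2))
          = (A1-(B1-B2+A2)) * (-(a^2)) + (-1) * (B1-B2+A2) := by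
      rw [Finset.sum_add_distrib, ← Finset.mul_sum, e5, Finset.sum_const,
        nsmul_eq_mul, hcarde]
    have := e1.symm.trans (e2.trans ((Finset.sum_congr rfl e3).trans e4))
    linear_combination -this
  have hB0 : B1-B2+A2 = 0 := by linear_combination -hmain 0
  have hM1 : A1-(B1-B2+A2) = 1 := by linear_combination hmain 0 - hmain 1
  have hρ1 : ∀ a y : F, Rf 0 a y = y + B1 := by
    intro a y
    linear_combination hρ a y + a * hB0 + y * hM1
  have hBpre1 : ∀ p1 p2 p3 : F, p1 ≠ 0 →
      (Ψ (p1,p2,p3)).2.1 * ((Ψ (p1,p2,p3)).1 + (Ψ (p1,p2,p3)).2.1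
          + (Ψ (p1,p2,p3)).1 * (Ψ (p1,p2,p3)).2.1)
        = p2*(p1+p2+p1*p2) := by
    intro p1 p2 p3 hp1
    have h := hBpre p1 p2 p3 hp1
    linear_combination h + (p2*(p1+p2+p1*p2)) * hM1 + hB0
  -- the cube-power sum argument: Xf 0 a r = 0
  have hX0 : ∀ a r : F, Xf 0 a r = 0 := by
    intro a r
    have e1 : ∑ T ∈ Finset.univ.erase (0:F),
        ((T*(Xf 0 a r) - a) * (T + (T*(Xf 0 a r) - a) + T*(T*(Xf 0 a r) - a)))^j
          = -((Xf 0 a r)^(2*j)) - (a^2)^j := by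
      have h1 := my_sum_B_pow (Xf 0 a r) a j hj1 h3j
      rw [Finset.sum_erase_eq_sub (Finset.mem_univ (0:F)), h1]
      show -((Xf 0 a r) ^ (2*j)) - (((0:F)*(Xf 0 a r) - a) * ((0:F) + ((0:F)*(Xf 0 a r) - a)
        + (0:F)*((0:F)*(Xf 0 a r) - a)))^j = -((Xf 0 a r)^(2*j)) - (a^2)^j
      rw [show ((0:F)*(Xf 0 a r) - a) * ((0:F) + ((0:F)*(Xf 0 a r) - a)
        + (0:F)*((0:F)*(Xf 0 a r) - a)) = a^2 from by ring]
    have e3 : ∀ t ∈ Finset.univ.erase (0:F),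
        (((Ψ (t,-a,-r)).1*(Xf 0 a r) - a) * ((Ψ (t,-a,-r)).1
            + ((Ψ (t,-a,-r)).1*(Xf 0 a r) - a)
            + (Ψ (t,-a,-r)).1*((Ψ (t,-a,-r)).1*(Xf 0 a r) - a)))^j
          = (-a*(t + -a + t * -a))^j := by
      intro t ht
      have ht0 := Finset.ne_of_mem_erase ht
      have lf := lineFacts a r t ht0
      have hbp := hBpre1 t (-a) (-r) ht0
      have h21 : (Ψ (t,-a,-r)).2.1 = (Ψ (t,-a,-r)).1*(Xf 0 a r) - a := by
        linear_combination lf.2.1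
      rw [← h21, hbp]
    have e5 : ∑ t ∈ Finset.univ.erase (0:F), (-a*(t + -a + t * -a))^j = -(a^2)^j := by
      have h1 : ∑ t : F, (-a*(t + -a + t * -a))^j = 0 := by
        rw [show (fun t : F => (-a*(t + -a + t * -a))^j)
            = (fun t : F => ((t*0 - a) * (t + (t*0 - a) + t*(t*0 - a)))^j) from
          funext (fun t => by ring_nf)]
        rw [my_sum_B_pow 0 a j hj1 h3j, zero_pow (by omega), neg_zero]
      rw [Finset.sum_erase_eq_sub (Finset.mem_univ (0:F)), h1]
      show (0:F) - (-a*((0:F) + -a + (0:F) * -a))^j = -(a^2)^j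
      rw [show (-a*((0:F) + -a + (0:F) * -a)) = a^2 from by ring]
      ring
    have e2 := lineSum a r (fun T => ((T*(Xf 0 a r) - a) * (T + (T*(Xf 0 a r) - a)
        + T*(T*(Xf 0 a r) - a)))^j)
    have heq := e1.symm.trans (e2.trans ((Finset.sum_congr rfl e3).trans e5))
    have hpow : (Xf 0 a r)^(2*j) = 0 := by linear_combination -heq
    exact pow_eq_zero_iff (by omega : 2*j ≠ 0) |>.mp hpow
  -- second coordinates of point images are preserved
  have hP2e : ∀ p1 p2 p3 : F, p1 ≠ 0 → (Ψ (p1,p2,p3)).2.1 = p2 := by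
    intro p1 p2 p3 hp1
    have lf := ((fact4 p1 p2 p3 hp1).2 0).1
    rw [show p1*0 - p2 = -p2 from by ring,
        show p1*p2*0*(p1+p2+p1*p2) - p3 = -p3 from by ring,
        hX0 (-p2) (-p3)] at lf
    linear_combination lf
  -- first coordinates of line images are preserved
  have hXid : ∀ x a r : F, Xf x a r = x := by
    intro x a r
    by_cases hx : x = 0
    · rw [hx]; exact hX0 a r
    · have hcard3 : ({0, a/x, (a-1)/x} : Finset F).card < Fintype.card F := by
        refine lt_of_le_of_lt ?_ (show 3 < Fintype.card F from by omega)
        refine le_trans (Finset.card_insert_le _ _) (Nat.succ_le_succ ?_)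
        refine le_trans (Finset.card_insert_le _ _) (Nat.succ_le_succ ?_)
        exact le_of_eq (Finset.card_singleton _)
      obtain ⟨t, ht⟩ := hnotin _ hcard3
      simp only [Finset.mem_insert, Finset.mem_singleton, not_or] at ht
      have ht0 : t ≠ 0 := ht.1
      have hp2' : t*x - a ≠ 0 := by
        intro h
        apply ht.2.1
        field_simp
        linear_combination h
      have hp2'' : t*x - a ≠ -1 := by
        intro h
        apply ht.2.2
        field_simp
        linear_combination h
      have lf := ((fact4 t (t*x - a) (t*(t*x-a)*x*(t + (t*x-a) + t*(t*x-a)) - r) ht0).2 x).1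
      rw [show t*x - (t*x - a) = a from by ring,
          show t*(t*x-a)*x*(t + (t*x-a) + t*(t*x-a))
              - (t*(t*x-a)*x*(t + (t*x-a) + t*(t*x-a)) - r) = r from by ring] at lf
      have h21 := hP2e t (t*x - a) (t*(t*x-a)*x*(t + (t*x-a) + t*(t*x-a)) - r) ht0
      have hbp := hBpre1 t (t*x - a) (t*(t*x-a)*x*(t + (t*x-a) + t*(t*x-a)) - r) ht0
      rw [h21] at hbp
      have hP1t : (Ψ (t, t*x - a, t*(t*x-a)*x*(t + (t*x-a) + t*(t*x-a)) - r)).1 = t := by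
        have hfac : (t*x - a) * ((1 + (t*x - a))
            * ((Ψ (t, t*x - a, t*(t*x-a)*x*(t + (t*x-a) + t*(t*x-a)) - r)).1 - t)) = 0 := by
          linear_combination hbp
        rcases mul_eq_zero.mp hfac with h' | h'
        · exact absurd h' hp2'
        · rcases mul_eq_zero.mp h' with h'' | h''
          · exact absurd (by linear_combination h'' : t*x - a = -1) hp2''
          · linear_combination h''
      rw [h21, hP1t] at lf
      exact (mul_left_cancel₀ ht0 (by linear_combination lf)).symm
  -- first coordinates of point images are preserved
  have hP1e : ∀ p1 p2 p3 : F, p1 ≠ 0 → (Ψ (p1,p2,p3)).1 = p1 := by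
    intro p1 p2 p3 hp1
    have lf := ((fact4 p1 p2 p3 hp1).2 1).1
    rw [hXid 1 (p1*1 - p2) (p1*p2*1*(p1+p2+p1*p2) - p3), hP2e p1 p2 p3 hp1] at lf
    linear_combination -lf
  -- third coordinates of point images
  have hP3e : ∀ p1 p2 p3 : F, p1 ≠ 0 → (Ψ (p1,p2,p3)).2.2 = p3 - B1 := by
    intro p1 p2 p3 hp1
    have lf := ((fact4 p1 p2 p3 hp1).2 0).2
    rw [hρ1, hP2e p1 p2 p3 hp1, hP1e p1 p2 p3 hp1] at lf
    linear_combination lf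
  -- conclusion
  refine ⟨-B1, fun p1 p2 p3 => ?_, fun l1 l2 l3 => ?_⟩
  · rw [hΨ (p1,p2,p3)]
    by_cases hp1 : p1 = 0
    · subst hp1
      rw [hp0 p2 p3, hρ1 (-p2) (-p3)]
      exact congrArg Sum.inl (Prod.ext rfl (Prod.ext rfl (by ring)))
    · exact congrArg Sum.inl (Prod.ext (hP1e p1 p2 p3 hp1)
        (Prod.ext (hP2e p1 p2 p3 hp1) (by rw [hP3e p1 p2 p3 hp1]; ring)))
  · rw [hXR l1 l2 l3, hXid l1 l2 l3, hRx l1 0 l2 l3, hρ1 l2 l3]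
    exact congrArg Sum.inr (Prod.ext rfl (Prod.ext rfl (by ring)))
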